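/- (Pair of pants) Let X and Y be objects of a monoidal category C with an exact pairing (coev₁ : 𝟙 ⟶ X ⊗ Y, ev₁ : Y ⊗ X ⟶ 𝟙) and an exact pairing in the opposite direction (coev₂ : 𝟙 ⟶ Y ⊗ X, ev₂ : X ⊗ Y ⟶ 𝟙). Then the object X ⊗ Y carries a Frobenius algebra structure with multiplication μ = (X ◁ ev₁ ▷ Y) modulo associators, unit η = coev₁, comultiplication δ = (X ◁ coev₂ ▷ Y) modulo associators, and counit ε = ev₂: these data satisfy the monoid axioms, the comonoid axioms, and the Frobenius law. -/

import Mathlib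

open CategoryTheory MonoidalCategory

variable {C : Type*} [Category C] [MonoidalCategory C]

/-- Pair of pants multiplication: `X ◁ ev₁ ▷ Y` modulo associators. -/
noncomputable def pantsMul (X Y : C) [ExactPairing X Y] :
    (X ⊗ Y) ⊗ (X ⊗ Y) ⟶ X ⊗ Y :=
  (α_ X Y (X ⊗ Y)).hom ≫ (X ◁ ((α_ Y X Y).inv ≫ ((ε_ X Y) ▷ Y) ≫ (λ_ Y).hom))

/-- Pair of pants unit: the coevaluation `coev₁`. -/
noncomputable def pantsUnit (X Y : C) [ExactPairing X Y] : 𝟙_ C ⟶ X ⊗ Y :=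
  η_ X Y

/-- Pair of pants comultiplication: `X ◁ coev₂ ▷ Y` modulo associators. -/
noncomputable def pantsComul (X Y : C) [ExactPairing Y X] :
    X ⊗ Y ⟶ (X ⊗ Y) ⊗ (X ⊗ Y) :=
  (X ◁ ((λ_ Y).inv ≫ ((η_ Y X) ▷ Y) ≫ (α_ Y X Y).hom)) ≫ (α_ X Y (X ⊗ Y)).inv

/-- Pair of pants counit: the evaluation `ev₂`. -/
noncomputable def pantsCounit (X Y : C) [ExactPairing Y X] : X ⊗ Y ⟶ 𝟙_ C :=
  ε_ Y X

/-- (Pair of pants) Given an exact pairing `(coev₁ : 𝟙 ⟶ X ⊗ Y, ev₁ : Y ⊗ X ⟶ 𝟙)` and an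
exact pairing in the opposite direction `(coev₂ : 𝟙 ⟶ Y ⊗ X, ev₂ : X ⊗ Y ⟶ 𝟙)`, the object
`X ⊗ Y` carries a Frobenius algebra structure with multiplication `X ◁ ev₁ ▷ Y`, unit
`coev₁`, comultiplication `X ◁ coev₂ ▷ Y` and counit `ev₂`: these satisfy the monoid
axioms, the comonoid axioms and the Frobenius law. -/
theorem stmt_4 (X Y : C) [ExactPairing X Y] [ExactPairing Y X] :
    -- monoid axioms
    ((pantsMul X Y ▷ (X ⊗ Y)) ≫ pantsMul X Y =
      (α_ (X ⊗ Y) (X ⊗ Y) (X ⊗ Y)).hom ≫ ((X ⊗ Y) ◁ pantsMul X Y) ≫ pantsMul X Y) ∧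
    ((pantsUnit X Y ▷ (X ⊗ Y)) ≫ pantsMul X Y = (λ_ (X ⊗ Y)).hom) ∧
    (((X ⊗ Y) ◁ pantsUnit X Y) ≫ pantsMul X Y = (ρ_ (X ⊗ Y)).hom) ∧
    -- comonoid axioms
    (pantsComul X Y ≫ (pantsComul X Y ▷ (X ⊗ Y)) ≫ (α_ (X ⊗ Y) (X ⊗ Y) (X ⊗ Y)).hom =
      pantsComul X Y ≫ ((X ⊗ Y) ◁ pantsComul X Y)) ∧
    (pantsComul X Y ≫ (pantsCounit X Y ▷ (X ⊗ Y)) = (λ_ (X ⊗ Y)).inv) ∧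
    (pantsComul X Y ≫ ((X ⊗ Y) ◁ pantsCounit X Y) = (ρ_ (X ⊗ Y)).inv) ∧
    -- Frobenius law
    ((pantsComul X Y ▷ (X ⊗ Y)) ≫ (α_ (X ⊗ Y) (X ⊗ Y) (X ⊗ Y)).hom ≫
        ((X ⊗ Y) ◁ pantsMul X Y) = pantsMul X Y ≫ pantsComul X Y) ∧
    (((X ⊗ Y) ◁ pantsComul X Y) ≫ (α_ (X ⊗ Y) (X ⊗ Y) (X ⊗ Y)).inv ≫
        (pantsMul X Y ▷ (X ⊗ Y)) = pantsMul X Y ≫ pantsComul X Y) := by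
  refine ⟨?_, ?_, ?_, ?_, ?_, ?_, ?_, ?_⟩ <;>
    dsimp only [pantsMul, pantsUnit, pantsComul, pantsCounit]
  · calc _ = 𝟙 _ ⊗≫ X ◁ (ε_ X Y ⊗ₘ ε_ X Y) ▷ Y ⊗≫ 𝟙 _ := by rw [MonoidalCategory.tensorHom_def]; monoidal
      _ = _ := by rw [tensorHom_def']; monoidal
  · calc _ = 𝟙 _ ⊗≫ (η_ X Y ▷ X ≫ (α_ X Y X).hom ≫ X ◁ ε_ X Y) ▷ Y ⊗≫ 𝟙 _ := by monoidal
      _ = _ := by rw [ExactPairing.evaluation_coevaluation]; monoidal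
  · calc _ = 𝟙 _ ⊗≫ X ◁ (Y ◁ η_ X Y ≫ (α_ Y X Y).inv ≫ ε_ X Y ▷ Y) ⊗≫ 𝟙 _ := by monoidal
      _ = _ := by rw [ExactPairing.coevaluation_evaluation]; monoidal
  · calc _ = 𝟙 _ ⊗≫ X ◁ (η_ Y X ⊗ₘ η_ Y X) ▷ Y ⊗≫ 𝟙 _ := by rw [tensorHom_def']; monoidal
      _ = _ := by rw [MonoidalCategory.tensorHom_def]; monoidal
  · calc _ = 𝟙 _ ⊗≫ (X ◁ η_ Y X ≫ (α_ X Y X).inv ≫ ε_ Y X ▷ X) ▷ Y ⊗≫ 𝟙 _ := by monoidal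
      _ = _ := by rw [ExactPairing.coevaluation_evaluation]; monoidal
  · calc _ = 𝟙 _ ⊗≫ X ◁ (η_ Y X ▷ Y ≫ (α_ Y X Y).hom ≫ Y ◁ ε_ Y X) ⊗≫ 𝟙 _ := by monoidal
      _ = _ := by rw [ExactPairing.evaluation_coevaluation]; monoidal
  · calc _ = 𝟙 _ ⊗≫ X ◁ (η_ Y X ⊗ₘ ε_ X Y) ▷ Y ⊗≫ 𝟙 _ := by rw [MonoidalCategory.tensorHom_def]; monoidal
      _ = _ := by rw [tensorHom_def']; monoidal
  · calc _ = 𝟙 _ ⊗≫ X ◁ (ε_ X Y ⊗ₘ η_ Y X) ▷ Y ⊗≫ 𝟙 _ := by rw [tensorHom_def']; monoidal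
      _ = _ := by rw [MonoidalCategory.tensorHom_def]; monoidal
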